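/- Let β : ℕ → ℕ be defined by β(j) = 2 if j is a positive multiple of 2n with j ≥ 4n, β(j) = 1 if j is even with j ≥ 2n and j is not a multiple of 2n with j ≥ 4n, and β(j) = 0 otherwise (where n ≥ 1 is a fixed integer). Then the limit as q → ∞ of (1/q) · Σ_{k=0}^{q} (-1)^k β(k) exists and equals (n+1)/(2n). -/

import Mathlib

open Filter Finset

private lemma cast_div_ge (a b : ℕ) (hb : 0 < b) : (a : ℝ) / b - 1 ≤ ((a / b : ℕ) : ℝ) := by
  have h1 : a < b * (a / b) + b := by
    have h2 := Nat.div_add_mod a b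
    have h3 := Nat.mod_lt a hb
    omega
  have hbR : (0 : ℝ) < b := by exact_mod_cast hb
  rw [sub_le_iff_le_add, div_le_iff₀ hbR]
  have h4 : (a : ℝ) ≤ b * ((a / b : ℕ) : ℝ) + b := by exact_mod_cast h1.le
  nlinarith [h4]

private lemma sum_formula (n : ℕ) (hn : 1 ≤ n) (β : ℕ → ℝ)
    (hβ2 : ∀ j : ℕ, (∃ k : ℕ, 2 ≤ k ∧ j = 2 * n * k) → β j = 2)
    (hβ1 : ∀ j : ℕ, (∃ k : ℕ, j = 2 * n + 2 * k) →
      ¬ (∃ k : ℕ, 2 ≤ k ∧ j = 2 * n * k) → β j = 1)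
    (hβ0 : ∀ j : ℕ, ¬ (∃ k : ℕ, j = 2 * n + 2 * k) → β j = 0) :
    ∀ q : ℕ, 2 * n ≤ q →
      ∑ k ∈ Finset.range (q + 1), (-1 : ℝ) ^ k * β k
        = (((q - 2 * n) / 2 + q / (2 * n) : ℕ) : ℝ) := by
  intro q hq
  induction q, hq using Nat.le_induction with
  | base =>
    rw [Finset.sum_range_succ]
    have hzero : ∑ k ∈ Finset.range (2 * n), (-1 : ℝ) ^ k * β k = 0 := by
      apply Finset.sum_eq_zero
      intro k hk
      simp only [Finset.mem_range] at hk
      rw [hβ0 k (by rintro ⟨k', hk'⟩; omega)]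
      ring
    have hβval : β (2 * n) = 1 := by
      apply hβ1 (2 * n) ⟨0, by ring⟩
      rintro ⟨k, hk2, hk⟩
      have : 2 * n * 2 ≤ 2 * n * k := Nat.mul_le_mul_left _ hk2
      omega
    have hsign : (-1 : ℝ) ^ (2 * n) = 1 := Even.neg_one_pow ⟨n, by ring⟩
    rw [hzero, hβval, hsign]
    rw [Nat.sub_self, Nat.zero_div, Nat.div_self (by omega)]
    norm_num
  | succ q hq ih =>
    rw [Finset.sum_range_succ, ih]
    have h2 : (q + 1) / (2 * n) = q / (2 * n) + if 2 * n ∣ q + 1 then 1 else 0 :=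
      Nat.succ_div
    have h1 : (q + 1 - 2 * n) / 2 = (q - 2 * n) / 2 + if 2 ∣ q + 1 - 2 * n then 1 else 0 := by
      rw [show q + 1 - 2 * n = (q - 2 * n) + 1 from by omega]
      exact Nat.succ_div
    by_cases he : 2 ∣ q + 1
    · -- q+1 even
      obtain ⟨t, ht⟩ := he
      have hsign : (-1 : ℝ) ^ (q + 1) = 1 := Even.neg_one_pow ⟨t, by omega⟩
      have hd2 : 2 ∣ q + 1 - 2 * n := by omega
      by_cases hdn : 2 * n ∣ q + 1
      · obtain ⟨s, hs⟩ := hdn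
        have hs2 : 2 ≤ s := by
          by_contra hcon
          interval_cases s <;> omega
        have hβval : β (q + 1) = 2 := hβ2 (q + 1) ⟨s, hs2, hs⟩
        rw [hβval, hsign, h1, h2, if_pos hd2, if_pos ⟨s, hs⟩]
        push_cast
        ring
      · have hβval : β (q + 1) = 1 := by
          apply hβ1 (q + 1) ⟨(q + 1 - 2 * n) / 2, by omega⟩
          rintro ⟨k, hk2, hk⟩
          exact hdn ⟨k, hk⟩
        rw [hβval, hsign, h1, h2, if_pos hd2, if_neg hdn]
        push_cast
        ring
    · -- q+1 odd
      have hβval : β (q + 1) = 0 := by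
        apply hβ0
        rintro ⟨k, hk⟩
        omega
      have hdn : ¬ 2 * n ∣ q + 1 := by
        rintro ⟨t, ht⟩
        exact he ⟨n * t, by rw [ht]; ring⟩
      have hd2 : ¬ 2 ∣ q + 1 - 2 * n := by omega
      rw [hβval, h1, h2, if_neg hdn, if_neg hd2]
      push_cast
      ring

theorem stmt_0 (n : ℕ) (hn : 1 ≤ n) (β : ℕ → ℝ)
    (hβ2 : ∀ j : ℕ, (∃ k : ℕ, 2 ≤ k ∧ j = 2 * n * k) → β j = 2)
    (hβ1 : ∀ j : ℕ, (∃ k : ℕ, j = 2 * n + 2 * k) →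
      ¬ (∃ k : ℕ, 2 ≤ k ∧ j = 2 * n * k) → β j = 1)
    (hβ0 : ∀ j : ℕ, ¬ (∃ k : ℕ, j = 2 * n + 2 * k) → β j = 0) :
    Tendsto (fun q : ℕ => (1 / (q : ℝ)) * ∑ k ∈ Finset.range (q + 1), (-1 : ℝ) ^ k * β k)
      atTop (nhds (((n : ℝ) + 1) / (2 * n))) := by
  have hnR : (0 : ℝ) < n := by exact_mod_cast hn
  set c : ℝ := ((n : ℝ) + 1) / (2 * n) with hc
  have hform := sum_formula n hn β hβ2 hβ1 hβ0
  apply tendsto_of_tendsto_of_tendsto_of_le_of_le'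
    (g := fun q : ℕ => c - ((n : ℝ) + 2) / q) (h := fun _ : ℕ => c)
  · -- g tends to c
    have h0 : Tendsto (fun q : ℕ => ((n : ℝ) + 2) / q) atTop (nhds 0) :=
      tendsto_const_nhds.div_atTop tendsto_natCast_atTop_atTop
    have := (tendsto_const_nhds (x := c)).sub h0
    simpa using this
  · exact tendsto_const_nhds
  · -- lower bound, eventually
    filter_upwards [eventually_ge_atTop (2 * n), eventually_ge_atTop 1] with q hq hq1
    have hqR : (0 : ℝ) < q := by exact_mod_cast hq1
    rw [hform q hq]
    set A : ℕ := (q - 2 * n) / 2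
    set B : ℕ := q / (2 * n)
    have hA : ((q : ℝ) - 2 * n) / 2 - 1 ≤ (A : ℝ) := by
      have := cast_div_ge (q - 2 * n) 2 (by norm_num)
      rw [Nat.cast_sub hq] at this
      push_cast at this
      exact this
    have hB : (q : ℝ) / (2 * n) - 1 ≤ (B : ℝ) := by
      have := cast_div_ge q (2 * n) (by omega)
      push_cast at this
      exact this
    have key : ((q : ℝ) - 2 * n) / 2 + (q : ℝ) / (2 * n) = (q : ℝ) * c - n := by
      rw [hc]
      field_simp
      ring
    have expand : (c - ((n : ℝ) + 2) / q) * q = (q : ℝ) * c - (n + 2) := by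
      field_simp
    have hsum : (q : ℝ) * c - ((n : ℝ) + 2) ≤ (A : ℝ) + (B : ℝ) := by
      push_cast at hA hB ⊢
      linarith [hA, hB, key]
    rw [one_div, ← div_eq_inv_mul, le_div_iff₀ hqR, expand]
    push_cast
    push_cast at hsum
    linarith
  · -- upper bound, eventually
    filter_upwards [eventually_ge_atTop (2 * n), eventually_ge_atTop 1] with q hq hq1
    have hqR : (0 : ℝ) < q := by exact_mod_cast hq1
    rw [hform q hq]
    set A : ℕ := (q - 2 * n) / 2
    set B : ℕ := q / (2 * n)
    have hA : (A : ℝ) ≤ ((q : ℝ) - 2 * n) / 2 := by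
      have := Nat.cast_div_le (α := ℝ) (m := q - 2 * n) (n := 2)
      rw [Nat.cast_sub hq] at this
      push_cast at this
      exact this
    have hB : (B : ℝ) ≤ (q : ℝ) / (2 * n) := by
      have := Nat.cast_div_le (α := ℝ) (m := q) (n := 2 * n)
      push_cast at this
      exact this
    have key : ((q : ℝ) - 2 * n) / 2 + (q : ℝ) / (2 * n) = (q : ℝ) * c - n := by
      rw [hc]
      field_simp
      ring
    rw [one_div, ← div_eq_inv_mul, div_le_iff₀ hqR]
    push_cast
    nlinarith [hA, hB, key, hnR, hqR]
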